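/- Let f, g : [0,1] → [0,1]² be continuous with f(0) = (0,0), f(1) = (1,1), g(0) = (0,1), g(1) = (1,0), and let f₂, g₂ : [0,1] → [0,1]² be defined from f, g as in the extension construction. Suppose σ, τ ∈ [0,1] satisfy f₂(σ) = g₂(τ) = x. Then 3σ - 1 ∈ [0,1], 3τ - 1 ∈ [0,1], and f(3σ - 1) = 3x - (1,1) = g(3τ - 1); in particular 3x - (1,1) ∈ range(f) ∩ range(g). -/

import Mathlib

open Set

noncomputable section

/-- The Euclidean plane. -/
abbrev E2 := EuclideanSpace ℝ (Fin 2)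

/-- The point `(x, y)` of the Euclidean plane. -/
def pt (x y : ℝ) : E2 := WithLp.toLp 2 ![x, y]

/-- The closed unit square `[0,1]²`. -/
def unitSq : Set E2 := {p | p 0 ∈ Icc (0:ℝ) 1 ∧ p 1 ∈ Icc (0:ℝ) 1}

/-- The open unit square `(0,1)²`. -/
def openUnitSq : Set E2 := {p | p 0 ∈ Ioo (0:ℝ) 1 ∧ p 1 ∈ Ioo (0:ℝ) 1}

/-- `f₁ : [-1,2] → ℝ²`: extend `f` by the diagonal outside `[0,1]`. -/
def extF (f : ℝ → E2) (t : ℝ) : E2 := if t ∈ Icc (0:ℝ) 1 then f t else pt t t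

/-- `g₁ : [-1,2] → ℝ²`: extend `g` by the antidiagonal outside `[0,1]`. -/
def extG (g : ℝ → E2) (t : ℝ) : E2 := if t ∈ Icc (0:ℝ) 1 then g t else pt t (1 - t)

/-- `f₂(t) = (f₁(3t-1) + (1,1))/3`. -/
def sqF (f : ℝ → E2) (t : ℝ) : E2 := (3:ℝ)⁻¹ • (extF f (3*t - 1) + pt 1 1)

/-- `g₂(t) = (g₁(3t-1) + (1,1))/3`. -/
def sqG (g : ℝ → E2) (t : ℝ) : E2 := (3:ℝ)⁻¹ • (extG g (3*t - 1) + pt 1 1)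

/-- A common value of `f₂` and `g₂` yields a common value of `f` and `g`. -/
theorem pullback_intersection (f g : ℝ → E2)
    (hfc : ContinuousOn f (Icc 0 1)) (hgc : ContinuousOn g (Icc 0 1))
    (hfm : MapsTo f (Icc 0 1) unitSq) (hgm : MapsTo g (Icc 0 1) unitSq)
    (hf0 : f 0 = pt 0 0) (hf1 : f 1 = pt 1 1)
    (hg0 : g 0 = pt 0 1) (hg1 : g 1 = pt 1 0)
    (σ τ : ℝ) (hσ : σ ∈ Icc (0:ℝ) 1) (hτ : τ ∈ Icc (0:ℝ) 1)
    (x : E2) (hx1 : sqF f σ = x) (hx2 : sqG g τ = x) :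
    3*σ - 1 ∈ Icc (0:ℝ) 1 ∧ 3*τ - 1 ∈ Icc (0:ℝ) 1 ∧
    f (3*σ - 1) = (3:ℝ) • x - pt 1 1 ∧ g (3*τ - 1) = (3:ℝ) • x - pt 1 1 ∧
    (3:ℝ) • x - pt 1 1 ∈ f '' Icc (0:ℝ) 1 ∩ g '' Icc (0:ℝ) 1 := by
  have hF : extF f (3*σ - 1) = (3:ℝ) • x - pt 1 1 := by
    have h : (3:ℝ) • x = extF f (3*σ - 1) + pt 1 1 := by
      rw [← hx1]; unfold sqF; rw [smul_smul]; norm_num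
    rw [h, add_sub_cancel_right]
  have hG : extG g (3*τ - 1) = (3:ℝ) • x - pt 1 1 := by
    have h : (3:ℝ) • x = extG g (3*τ - 1) + pt 1 1 := by
      rw [← hx2]; unfold sqG; rw [smul_smul]; norm_num
    rw [h, add_sub_cancel_right]
  have hEq : extF f (3*σ - 1) = extG g (3*τ - 1) := by rw [hF, hG]
  have hsI : 3*σ - 1 ∈ Icc (0:ℝ) 1 := by
    by_contra hs
    rw [extF, if_neg hs] at hEq
    by_cases ht : 3*τ - 1 ∈ Icc (0:ℝ) 1
    · rw [extG, if_pos ht] at hEq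
      have hm := hgm ht
      have h0 : (3*σ - 1 : ℝ) ∈ Icc (0:ℝ) 1 := by
        have := congrArg (fun p : E2 => p 0) hEq
        simp only [pt, PiLp.toLp_apply, Matrix.cons_val_zero] at this
        rw [this]; exact hm.1
      exact hs h0
    · rw [extG, if_neg ht] at hEq
      have h0 := congrArg (fun p : E2 => p 0) hEq
      have h1 := congrArg (fun p : E2 => p 1) hEq
      simp only [pt, PiLp.toLp_apply, Matrix.cons_val_zero, Matrix.cons_val_one, Matrix.head_cons] at h0 h1
      apply ht; constructor <;> nlinarith
  have htI : 3*τ - 1 ∈ Icc (0:ℝ) 1 := by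
    by_contra ht
    rw [extG, if_neg ht] at hEq
    rw [extF, if_pos hsI] at hEq
    have hm := hfm hsI
    have h0 : (3*τ - 1 : ℝ) ∈ Icc (0:ℝ) 1 := by
      have := congrArg (fun p : E2 => p 0) hEq
      simp only [pt, PiLp.toLp_apply, Matrix.cons_val_zero] at this
      rw [← this]; exact hm.1
    exact ht h0
  rw [extF, if_pos hsI] at hF
  rw [extG, if_pos htI] at hG
  exact ⟨hsI, htI, hF, hG, ⟨_, hsI, hF⟩, ⟨_, htI, hG⟩⟩
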